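/- Eigenvalues of the Lindblad generator with zero real part have no nontrivial Jordan blocks: if γ ∈ ℂ with Re γ = 0, then for every integer k ≥ 1 the generalized eigenspace ker((𝓛 − γ·id)^k) equals the eigenspace ker(𝓛 − γ·id), where 𝓛 is viewed as a ℂ-linear endomorphism of M_N(ℂ). -/

import Mathlib

open Matrix
open scoped ComplexOrder

attribute [local instance] Matrix.normedAddCommGroup Matrix.normedSpace

/-- The Lindblad generator `𝓛(ρ) = -i[H,ρ] + Σ_d (V_d ρ V_d† - ½(V_d† V_d ρ + ρ V_d† V_d))`,
as a `ℂ`-linear endomorphism of the matrix space. -/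
noncomputable def lindbladOp {n : Type*} [Fintype n] [DecidableEq n] {ι : Type*} [Fintype ι]
    (H : Matrix n n ℂ) (V : ι → Matrix n n ℂ) :
    Matrix n n ℂ →ₗ[ℂ] Matrix n n ℂ where
  toFun ρ := -Complex.I • (H * ρ - ρ * H) +
    ∑ d, (V d * ρ * (V d)ᴴ - (1 / 2 : ℂ) • ((V d)ᴴ * V d * ρ + ρ * ((V d)ᴴ * V d)))
  map_add' x y := by
    simp only [mul_add, add_mul, smul_add, sub_eq_add_neg, neg_add,
      Finset.sum_add_distrib, Finset.sum_neg_distrib]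
    abel
  map_smul' c x := by
    simp only [Matrix.mul_smul, Matrix.smul_mul, smul_sub, smul_add, Finset.smul_sum,
      smul_comm c, RingHom.id_apply]

/-- A density matrix: positive semidefinite with trace one. -/
def IsDensityMatrix {n : Type*} [Fintype n] (ρ : Matrix n n ℂ) : Prop :=
  ρ.PosSemidef ∧ ρ.trace = 1

/-- A steady state of the Lindblad dynamics. -/
noncomputable def IsSteadyState {n : Type*} [Fintype n] [DecidableEq n] {ι : Type*} [Fintype ι]
    (H : Matrix n n ℂ) (V : ι → Matrix n n ℂ) (ρ : Matrix n n ℂ) : Prop :=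
  IsDensityMatrix ρ ∧ lindbladOp H V ρ = 0

/-- The support of a matrix: its range as a linear map `ℂ^N → ℂ^N`. -/
noncomputable def matSupport {n : Type*} [Fintype n] (ρ : Matrix n n ℂ) :
    Submodule ℂ (n → ℂ) :=
  LinearMap.range ρ.mulVecLin

/-- Time evolution `ρ(t) = exp(t𝓛)(ρ₀)`. -/
noncomputable def evolve {n : Type*} [Fintype n] [DecidableEq n] {ι : Type*} [Fintype ι]
    (H : Matrix n n ℂ) (V : ι → Matrix n n ℂ) (t : ℝ) (ρ : Matrix n n ℂ) : Matrix n n ℂ :=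
  letI : NormedRing (Matrix n n ℂ →L[ℂ] Matrix n n ℂ) := ContinuousLinearMap.toNormedRing
  @NormedSpace.exp _ _ _ NonUnitalSeminormedRing.toIsTopologicalRing
    ((t : ℂ) • (LinearMap.toContinuousLinearMap (lindbladOp H V))) ρ

set_option linter.unusedSectionVars false
set_option linter.unusedVariables false
set_option maxHeartbeats 1000000
set_option synthInstance.maxHeartbeats 400000

noncomputable instance matTopNormed {n : Type*} [Fintype n] : TopologicalSpace (Matrix n n ℂ) :=
  (Matrix.normedAddCommGroup : NormedAddCommGroup (Matrix n n ℂ)).toUniformSpace.toTopologicalSpace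

open Filter Topology

namespace LindbladProof

variable {A : Type*} [NormedRing A] [NormedAlgebra ℂ A] [CompleteSpace A] [NormOneClass A]

lemma norm_pow_le'' (x : A) (n : ℕ) : ‖x ^ n‖ ≤ ‖x‖ ^ n := by
  cases n with
  | zero => simp
  | succ n => exact norm_pow_le' x n.succ_pos

lemma norm_expterm_le (x : A) (n : ℕ) :
    ‖(n.factorial⁻¹ : ℂ) • x ^ n‖ ≤ ‖x‖ ^ n / n.factorial := by
  rw [norm_smul, norm_inv]
  have h1 : ‖((n.factorial : ℂ))‖ = (n.factorial : ℝ) := by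
    simpa using Complex.norm_natCast n.factorial
  rw [h1, div_eq_inv_mul]
  gcongr
  exact norm_pow_le'' x n

lemma real_exp_hasSum (r : ℝ) : HasSum (fun n : ℕ => r ^ n / n.factorial) (Real.exp r) := by
  rw [Real.exp_eq_exp_ℝ]
  exact NormedSpace.expSeries_div_hasSum_exp r

lemma norm_exp_le (x : A) : ‖NormedSpace.exp x‖ ≤ Real.exp ‖x‖ := by
  rw [NormedSpace.exp_eq_tsum ℂ]
  have hs : Summable fun n : ℕ => ‖(n.factorial⁻¹ : ℂ) • x ^ n‖ :=
    Summable.of_nonneg_of_le (fun n => norm_nonneg _) (norm_expterm_le x)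
      (real_exp_hasSum ‖x‖).summable
  refine (norm_tsum_le_tsum_norm hs).trans ?_
  calc ∑' n : ℕ, ‖(n.factorial⁻¹ : ℂ) • x ^ n‖
      ≤ ∑' n : ℕ, ‖x‖ ^ n / n.factorial :=
        Summable.tsum_le_tsum (norm_expterm_le x) hs (real_exp_hasSum ‖x‖).summable
    _ = Real.exp ‖x‖ := (real_exp_hasSum ‖x‖).tsum_eq

lemma exp_hasSum (x : A) :
    HasSum (fun n : ℕ => (n.factorial⁻¹ : ℂ) • x ^ n) (NormedSpace.exp x) :=
  NormedSpace.exp_series_hasSum_exp' x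

lemma exp_remainder_hasSum (x : A) :
    HasSum (fun n : ℕ => (((n+2 : ℕ)).factorial⁻¹ : ℂ) • x ^ (n+2))
      (NormedSpace.exp x - 1 - x) := by
  have h := (hasSum_nat_add_iff' (f := fun n : ℕ => (n.factorial⁻¹ : ℂ) • x ^ n) 2).mpr
    (exp_hasSum x)
  simpa [Finset.sum_range_succ, sub_sub] using h

lemma real_remainder_hasSum (r : ℝ) :
    HasSum (fun n : ℕ => r ^ (n+2) / ((n+2 : ℕ)).factorial)
      (Real.exp r - 1 - r) := by
  have h := (hasSum_nat_add_iff' (f := fun n : ℕ => r ^ n / n.factorial) 2).mpr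
    (real_exp_hasSum r)
  simpa [Finset.sum_range_succ, sub_sub] using h

lemma norm_exp_remainder_le (x : A) :
    ‖NormedSpace.exp x - 1 - x‖ ≤ Real.exp ‖x‖ - 1 - ‖x‖ := by
  have hs : Summable fun n : ℕ => ‖(((n+2 : ℕ)).factorial⁻¹ : ℂ) • x ^ (n+2)‖ :=
    Summable.of_nonneg_of_le (fun n => norm_nonneg _)
      (fun n => norm_expterm_le x (n+2)) (real_remainder_hasSum ‖x‖).summable
  rw [← (exp_remainder_hasSum x).tsum_eq]
  refine (norm_tsum_le_tsum_norm hs).trans ?_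
  calc ∑' n : ℕ, ‖(((n+2 : ℕ)).factorial⁻¹ : ℂ) • x ^ (n+2)‖
      ≤ ∑' n : ℕ, ‖x‖ ^ (n+2) / ((n+2 : ℕ)).factorial :=
        Summable.tsum_le_tsum (fun n => norm_expterm_le x (n+2)) hs
          (real_remainder_hasSum ‖x‖).summable
    _ = Real.exp ‖x‖ - 1 - ‖x‖ := (real_remainder_hasSum ‖x‖).tsum_eq

lemma real_remainder_le (r : ℝ) (hr : 0 ≤ r) :
    Real.exp r - 1 - r ≤ r ^ 2 * Real.exp r := by
  have h2 : HasSum (fun n : ℕ => r ^ 2 * (r ^ n / n.factorial)) (r ^ 2 * Real.exp r) :=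
    (real_exp_hasSum r).mul_left _
  refine hasSum_le (fun n => ?_) (real_remainder_hasSum r) h2
  have hfact : (n.factorial : ℝ) ≤ (((n+2 : ℕ)).factorial : ℝ) := by
    exact_mod_cast Nat.factorial_le (by omega)
  have hfp : (0:ℝ) < (n.factorial : ℝ) := by exact_mod_cast n.factorial_pos
  calc r ^ (n+2) / (((n+2 : ℕ)).factorial : ℝ)
      ≤ r ^ (n+2) / (n.factorial : ℝ) :=
        div_le_div_of_nonneg_left (pow_nonneg hr _) hfp hfact
    _ = r ^ 2 * (r ^ n / n.factorial) := by ring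

lemma norm_pow_sub_pow (P Q : A) (M : ℝ) (hP : ‖P‖ ≤ M) (hQ : ‖Q‖ ≤ M) (n : ℕ) :
    ‖P ^ (n+1) - Q ^ (n+1)‖ ≤ (n+1) * M ^ n * ‖P - Q‖ := by
  have hM0 : 0 ≤ M := le_trans (norm_nonneg P) hP
  induction n with
  | zero => simp
  | succ n ih =>
    have key : P ^ (n+2) - Q ^ (n+2)
        = P * (P ^ (n+1) - Q ^ (n+1)) + (P - Q) * Q ^ (n+1) := by
      have h2 : n + 2 = n + 1 + 1 := by omega
      rw [h2, mul_sub, sub_mul, ← pow_succ', ← pow_succ']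
      abel
    calc ‖P ^ (n+2) - Q ^ (n+2)‖
        ≤ ‖P * (P ^ (n+1) - Q ^ (n+1))‖ + ‖(P - Q) * Q ^ (n+1)‖ := key ▸ norm_add_le _ _
      _ ≤ ‖P‖ * ‖P ^ (n+1) - Q ^ (n+1)‖ + ‖P - Q‖ * ‖Q ^ (n+1)‖ :=
          add_le_add (norm_mul_le _ _) (norm_mul_le _ _)
      _ ≤ M * ((n+1) * M ^ n * ‖P - Q‖) + ‖P - Q‖ * M ^ (n+1) := by
          have h1 : ‖Q ^ (n+1)‖ ≤ M ^ (n+1) :=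
            (norm_pow_le'' Q (n+1)).trans (pow_le_pow_left₀ (norm_nonneg Q) hQ _)
          have h2 : ‖P ^ (n+1) - Q ^ (n+1)‖ ≤ (n+1) * M ^ n * ‖P - Q‖ := ih
          have h3 : 0 ≤ ‖P - Q‖ := norm_nonneg _
          nlinarith [norm_nonneg (P ^ (n+1) - Q ^ (n+1)), pow_nonneg hM0 n,
            pow_nonneg hM0 (n+1), mul_le_mul_of_nonneg_left h2 hM0]
      _ = ((n+1 : ℕ)+1) * M ^ (n+1) * ‖P - Q‖ := by push_cast; ring


lemma remainder_le_sq (x : A) (s : ℝ) (hxs : ‖x‖ ≤ s) :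
    ‖NormedSpace.exp x - 1 - x‖ ≤ s ^ 2 * Real.exp s := by
  refine (norm_exp_remainder_le x).trans ((real_remainder_le ‖x‖ (norm_nonneg x)).trans ?_)
  have h1 : Real.exp ‖x‖ ≤ Real.exp s := Real.exp_le_exp.mpr hxs
  have h2 : 0 ≤ ‖x‖ := norm_nonneg x
  exact mul_le_mul (pow_le_pow_left₀ h2 hxs 2) h1 (Real.exp_pos ‖x‖).le (by positivity)

lemma norm_exp_mul_exp_sub_exp_add (U W : A) :
    ‖NormedSpace.exp U * NormedSpace.exp W - NormedSpace.exp (U + W)‖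
      ≤ 4 * (‖U‖ + ‖W‖) ^ 2 * (1 + (‖U‖ + ‖W‖)) * Real.exp (‖U‖ + ‖W‖) ^ 2 := by
  set eU := NormedSpace.exp U with heU
  set eW := NormedSpace.exp W with heW
  set eUW := NormedSpace.exp (U + W) with heUW
  set s := ‖U‖ + ‖W‖ with hs
  have ha : 0 ≤ ‖U‖ := norm_nonneg U
  have hb : 0 ≤ ‖W‖ := norm_nonneg W
  have hs0 : 0 ≤ s := add_nonneg ha hb
  have hE1 : 1 ≤ Real.exp s := Real.one_le_exp hs0
  have key : eU * eW - eUW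
      = (eU - 1 - U) * eW + ((1 + U) * (eW - 1 - W) + (U * W + -(eUW - 1 - (U + W)))) := by
    noncomm_ring
  have g1 : ‖(eU - 1 - U) * eW‖ ≤ (s ^ 2 * Real.exp s) * Real.exp s := by
    refine (norm_mul_le _ _).trans ?_
    have h1 : ‖eU - 1 - U‖ ≤ s ^ 2 * Real.exp s :=
      remainder_le_sq U s (by rw [hs]; nlinarith)
    have h2 : ‖eW‖ ≤ Real.exp s :=
      (norm_exp_le W).trans (Real.exp_le_exp.mpr (by rw [hs]; nlinarith))
    exact mul_le_mul h1 h2 (norm_nonneg _) (by positivity)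
  have g2 : ‖(1 + U) * (eW - 1 - W)‖ ≤ (1 + s) * (s ^ 2 * Real.exp s) := by
    refine (norm_mul_le _ _).trans ?_
    have h1 : ‖(1 : A) + U‖ ≤ 1 + s := by
      refine (norm_add_le _ _).trans ?_
      rw [norm_one]; nlinarith
    have h2 : ‖eW - 1 - W‖ ≤ s ^ 2 * Real.exp s :=
      remainder_le_sq W s (by rw [hs]; nlinarith)
    exact mul_le_mul h1 h2 (norm_nonneg _) (by nlinarith)
  have g3 : ‖U * W‖ ≤ s ^ 2 := by
    refine (norm_mul_le _ _).trans ?_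
    nlinarith
  have g4 : ‖-(eUW - 1 - (U + W))‖ ≤ s ^ 2 * Real.exp s := by
    rw [norm_neg]
    exact remainder_le_sq (U + W) s (norm_add_le _ _)
  calc ‖eU * eW - eUW‖
      ≤ ‖(eU - 1 - U) * eW‖ + (‖(1 + U) * (eW - 1 - W)‖ + (‖U * W‖ + ‖-(eUW - 1 - (U + W))‖)) := by
        rw [key]
        exact (norm_add_le _ _).trans (by gcongr; exact (norm_add_le _ _).trans (by gcongr; exact norm_add_le _ _))
    _ ≤ (s ^ 2 * Real.exp s) * Real.exp s + ((1 + s) * (s ^ 2 * Real.exp s) + (s ^ 2 + s ^ 2 * Real.exp s)) := by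
        gcongr
    _ ≤ 4 * s ^ 2 * (1 + s) * Real.exp s ^ 2 := by
        have hEE : Real.exp s ≤ Real.exp s ^ 2 := by nlinarith
        have h1s : (1:ℝ) ≤ Real.exp s ^ 2 := by nlinarith
        nlinarith [sq_nonneg s, mul_le_mul_of_nonneg_left hEE (sq_nonneg s),
          mul_le_mul_of_nonneg_left h1s (sq_nonneg s),
          mul_nonneg (mul_nonneg (sq_nonneg s) (sq_nonneg (Real.exp s))) hs0,
          mul_nonneg (mul_nonneg (mul_nonneg hs0 (sq_nonneg s)) (sq_nonneg (Real.exp s))) hs0,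
          mul_le_mul_of_nonneg_left hEE (mul_nonneg hs0 (sq_nonneg s)),
          mul_le_mul_of_nonneg_left h1s (mul_nonneg hs0 (sq_nonneg s))]

lemma trotter_tendsto (X Y : A) :
    Tendsto (fun n : ℕ =>
        (NormedSpace.exp ((n : ℂ)⁻¹ • X) * NormedSpace.exp ((n : ℂ)⁻¹ • Y)) ^ n)
      atTop (𝓝 (NormedSpace.exp (X + Y))) := by
  set σ := ‖X‖ + ‖Y‖ with hσ
  have hσ0 : 0 ≤ σ := add_nonneg (norm_nonneg X) (norm_nonneg Y)
  set C := 4 * σ ^ 2 * (1 + σ) * Real.exp σ ^ 2 with hC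
  have hC0 : 0 ≤ C := by positivity
  rw [tendsto_iff_norm_sub_tendsto_zero]
  refine squeeze_zero' (Eventually.of_forall fun n => norm_nonneg _) ?_
    (tendsto_const_div_atTop_nhds_zero_nat (Real.exp σ * C))
  filter_upwards [eventually_ge_atTop 1] with n hn
  obtain ⟨m, rfl⟩ : ∃ m, n = m + 1 := ⟨n - 1, by omega⟩
  set n := m + 1
  have hnR : (1 : ℝ) ≤ (n : ℝ) := by exact_mod_cast hn
  have hnR0 : (0 : ℝ) < (n : ℝ) := by linarith
  set U := (n : ℂ)⁻¹ • X with hU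
  set W := (n : ℂ)⁻¹ • Y with hW
  have hnorm : ∀ z : A, ‖(n : ℂ)⁻¹ • z‖ = ‖z‖ / n := by
    intro z
    rw [norm_smul, norm_inv]
    rw [Complex.norm_natCast]
    rw [div_eq_inv_mul]
  have hsUW : ‖U‖ + ‖W‖ = σ / n := by rw [hU, hW, hnorm, hnorm, hσ, add_div]
  have hσn : σ / n ≤ σ := div_le_self hσ0 hnR
  have hEn : Real.exp (σ / n) ≤ Real.exp σ := Real.exp_le_exp.mpr hσn
  set P := NormedSpace.exp U * NormedSpace.exp W with hP
  set Q := NormedSpace.exp (U + W) with hQ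
  have hQpow : Q ^ n = NormedSpace.exp (X + Y) := by
    letI : NormedAlgebra ℚ A := NormedAlgebra.restrictScalars ℚ ℂ A
    rw [hQ, ← NormedSpace.exp_nsmul]
    congr 1
    rw [hU, hW, ← smul_add, ← Nat.cast_smul_eq_nsmul ℂ, smul_smul,
      mul_inv_cancel₀ (Nat.cast_ne_zero.mpr (Nat.succ_ne_zero m)), one_smul]
  have hPQ : ‖P - Q‖ ≤ C / (n : ℝ) ^ 2 := by
    refine (norm_exp_mul_exp_sub_exp_add U W).trans ?_
    rw [hsUW]
    have h1 : 4 * (σ / n) ^ 2 * (1 + σ / n) * Real.exp (σ / n) ^ 2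
        ≤ 4 * (σ / n) ^ 2 * (1 + σ) * Real.exp σ ^ 2 := by
      gcongr
    refine h1.trans (le_of_eq ?_)
    rw [hC, div_pow]
    ring
  have hPn : ‖P‖ ≤ Real.exp (σ / n) := by
    rw [hP]
    refine (norm_mul_le _ _).trans ?_
    have h1 := norm_exp_le U
    have h2 := norm_exp_le W
    have h3 : Real.exp ‖U‖ * Real.exp ‖W‖ = Real.exp (σ / n) := by
      rw [← Real.exp_add, hsUW]
    rw [← h3]
    exact mul_le_mul h1 h2 (norm_nonneg _) (Real.exp_pos _).le
  have hQn : ‖Q‖ ≤ Real.exp (σ / n) := by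
    refine (norm_exp_le _).trans (Real.exp_le_exp.mpr ?_)
    rw [← hsUW]; exact norm_add_le _ _
  have hkey := norm_pow_sub_pow P Q (Real.exp (σ / n)) hPn hQn m
  rw [hQpow] at hkey
  refine hkey.trans ?_
  have hMm : Real.exp (σ / n) ^ m ≤ Real.exp σ := by
    rw [← Real.exp_nat_mul]
    refine Real.exp_le_exp.mpr ?_
    rw [div_eq_inv_mul]
    have hmn : (m : ℝ) ≤ (n : ℝ) := by exact_mod_cast Nat.le_succ m
    calc (m : ℝ) * ((n:ℝ)⁻¹ * σ) ≤ (n : ℝ) * ((n:ℝ)⁻¹ * σ) := by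
          have : 0 ≤ (n:ℝ)⁻¹ * σ := by positivity
          nlinarith
      _ = σ := by field_simp
  calc ((m : ℝ) + 1) * Real.exp (σ / n) ^ m * ‖P - Q‖
      ≤ ((m : ℝ) + 1) * Real.exp σ * (C / (n : ℝ) ^ 2) := by
        have h0 : (0:ℝ) ≤ (m:ℝ) + 1 := by positivity
        have h1 : 0 ≤ ‖P - Q‖ := norm_nonneg _
        have h2 : 0 ≤ Real.exp (σ / n) ^ m := by positivity
        gcongr
    _ = Real.exp σ * C / (n : ℝ) := by
        have hn1 : ((m : ℝ) + 1) = (n : ℝ) := by push_cast [n]; ring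
        rw [hn1]
        field_simp
  done

variable {n : Type*} [Fintype n] [DecidableEq n] [Nonempty n]

lemma isClosed_nonneg_complex : IsClosed {z : ℂ | 0 ≤ z} := by
  have h : {z : ℂ | 0 ≤ z} = Complex.re ⁻¹' Set.Ici 0 ∩ Complex.im ⁻¹' {0} := by
    ext z
    simp [Complex.le_def, eq_comm]
  rw [h]
  exact (isClosed_Ici.preimage Complex.continuous_re).inter
    (isClosed_singleton.preimage Complex.continuous_im)

lemma continuous_entry (i j : n) : Continuous fun ρ : Matrix n n ℂ => ρ i j :=
  (continuous_apply j).comp (continuous_apply i)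

lemma continuous_quadform (x : n → ℂ) :
    Continuous fun ρ : Matrix n n ℂ => star x ⬝ᵥ ρ.mulVec x := by
  have h : (fun ρ : Matrix n n ℂ => star x ⬝ᵥ ρ.mulVec x)
      = fun ρ => ∑ i, star x i * ∑ j, ρ i j * x j := rfl
  rw [h]
  refine continuous_finset_sum _ fun i _ => Continuous.mul continuous_const ?_
  exact continuous_finset_sum _ fun j _ => ((continuous_entry i j).mul continuous_const)

lemma isClosed_posSemidef : IsClosed {ρ : Matrix n n ℂ | ρ.PosSemidef} := by
  have hset : {ρ : Matrix n n ℂ | ρ.PosSemidef}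
      = {ρ : Matrix n n ℂ | ρᴴ = ρ} ∩ ⋂ x : n → ℂ, {ρ | 0 ≤ star x ⬝ᵥ ρ.mulVec x} := by
    ext ρ
    simp only [Set.mem_setOf_eq, Set.mem_inter_iff, Set.mem_iInter]
    exact posSemidef_iff_dotProduct_mulVec
  rw [hset]
  refine IsClosed.inter ?_ (isClosed_iInter fun x => ?_)
  · exact isClosed_eq (continuous_matrix fun i j => (continuous_entry j i).star) continuous_id
  · exact isClosed_nonneg_complex.preimage (continuous_quadform x)

lemma posSemidef_real_smul {ρ : Matrix n n ℂ} (hρ : ρ.PosSemidef) {c : ℝ} (hc : 0 ≤ c) :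
    ((c : ℂ) • ρ).PosSemidef := by
  refine posSemidef_iff_dotProduct_mulVec.mpr ⟨?_, ?_⟩
  · show ((c : ℂ) • ρ)ᴴ = (c : ℂ) • ρ
    rw [conjTranspose_smul, Complex.star_def, Complex.conj_ofReal, hρ.1]
  · intro x
    rw [smul_mulVec, dotProduct_smul, smul_eq_mul]
    exact mul_nonneg (by exact_mod_cast hc) (hρ.dotProduct_mulVec_nonneg x)

/-- Positivity preserving continuous linear maps on matrices. -/
def Pres (T : Matrix n n ℂ →L[ℂ] Matrix n n ℂ) : Prop :=
  ∀ ρ : Matrix n n ℂ, ρ.PosSemidef → (T ρ).PosSemidef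

lemma Pres.mul {T S : Matrix n n ℂ →L[ℂ] Matrix n n ℂ} (hT : Pres T) (hS : Pres S) :
    Pres (T * S) := fun ρ hρ => hT _ (hS _ hρ)

lemma Pres.one : Pres (1 : Matrix n n ℂ →L[ℂ] Matrix n n ℂ) := fun ρ hρ => hρ

lemma Pres.pow {T : Matrix n n ℂ →L[ℂ] Matrix n n ℂ} (hT : Pres T) :
    ∀ m : ℕ, Pres (T ^ m)
  | 0 => by rw [pow_zero]; exact Pres.one
  | (m+1) => by rw [pow_succ]; exact (Pres.pow hT m).mul hT

lemma Pres.of_tendsto {f : ℕ → Matrix n n ℂ →L[ℂ] Matrix n n ℂ}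
    {T : Matrix n n ℂ →L[ℂ] Matrix n n ℂ}
    (h : Tendsto f atTop (𝓝 T)) (hf : ∀ᶠ m in atTop, Pres (f m)) : Pres T := by
  intro ρ hρ
  have happ : Tendsto (fun m => f m ρ) atTop (𝓝 (T ρ)) :=
    ((ContinuousLinearMap.apply ℂ (Matrix n n ℂ) ρ).continuous.tendsto T).comp h
  exact isClosed_posSemidef.mem_of_tendsto happ (hf.mono fun m hm => hm ρ hρ)

lemma smul_clm_pow_apply (c : ℂ) (Φ : Matrix n n ℂ →L[ℂ] Matrix n n ℂ) :
    ∀ (m : ℕ) (ρ : Matrix n n ℂ), ((c • Φ) ^ m) ρ = c ^ m • ((Φ ^ m) ρ)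
  | 0, ρ => by simp
  | (m+1), ρ => by
    rw [pow_succ', ContinuousLinearMap.mul_apply, smul_clm_pow_apply c Φ m,
      ContinuousLinearMap.smul_apply, _root_.map_smul, smul_smul,
      ← ContinuousLinearMap.mul_apply, ← pow_succ', ← pow_succ']

lemma Pres.exp_real_smul {Φ : Matrix n n ℂ →L[ℂ] Matrix n n ℂ} (hΦ : Pres Φ)
    {r : ℝ} (hr : 0 ≤ r) : Pres (NormedSpace.exp ((r : ℂ) • Φ)) := by
  intro ρ hρ
  have h0 := exp_hasSum ((r : ℂ) • Φ)
  have h1 := h0.mapL (ContinuousLinearMap.apply ℂ (Matrix n n ℂ) ρ)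
  refine isClosed_posSemidef.mem_of_tendsto h1.tendsto_sum_nat
    (Eventually.of_forall fun k => ?_)
  refine Finset.sum_induction _ _ (fun a b ha hb => ha.add hb) Matrix.PosSemidef.zero
    (fun m _ => ?_)
  have hterm : (ContinuousLinearMap.apply ℂ (Matrix n n ℂ) ρ)
        (((m.factorial : ℂ)⁻¹) • ((r : ℂ) • Φ) ^ m)
      = ((r ^ m / m.factorial : ℝ) : ℂ) • ((Φ ^ m) ρ) := by
    show (((m.factorial : ℂ)⁻¹) • ((r : ℂ) • Φ) ^ m) ρ = _
    rw [ContinuousLinearMap.smul_apply, smul_clm_pow_apply, smul_smul]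
    congr 1
    push_cast
    ring
  rw [hterm]
  exact posSemidef_real_smul ((hΦ.pow m) ρ hρ) (by positivity)

section Conj

variable (M : Matrix n n ℂ)

/-- Left multiplication as a continuous linear endomorphism. -/
noncomputable def lm : Matrix n n ℂ →L[ℂ] Matrix n n ℂ :=
  LinearMap.toContinuousLinearMap (LinearMap.mulLeft ℂ M)

/-- Right multiplication as a continuous linear endomorphism. -/
noncomputable def rm : Matrix n n ℂ →L[ℂ] Matrix n n ℂ :=
  LinearMap.toContinuousLinearMap (LinearMap.mulRight ℂ M)

@[simp] lemma lm_apply (ρ : Matrix n n ℂ) : lm M ρ = M * ρ := rfl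
@[simp] lemma rm_apply (ρ : Matrix n n ℂ) : rm M ρ = ρ * M := rfl

lemma lm_pow_apply (k : ℕ) (ρ : Matrix n n ℂ) : ((lm M) ^ k) ρ = M ^ k * ρ := by
  induction k with
  | zero => simp
  | succ k ih =>
    rw [pow_succ', ContinuousLinearMap.mul_apply, ih, lm_apply, ← mul_assoc, ← pow_succ']

lemma rm_pow_apply (k : ℕ) (ρ : Matrix n n ℂ) : ((rm M) ^ k) ρ = ρ * M ^ k := by
  induction k with
  | zero => simp
  | succ k ih =>
    rw [pow_succ', ContinuousLinearMap.mul_apply, ih, rm_apply, mul_assoc, ← pow_succ]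

lemma exp_lm_apply (ρ : Matrix n n ℂ) :
    NormedSpace.exp (lm M) ρ = (NormedSpace.exp (lm M) 1) * ρ := by
  have hs := exp_hasSum (lm M)
  have h1 := hs.mapL (ContinuousLinearMap.apply ℂ (Matrix n n ℂ) ρ)
  have h2 := (hs.mapL (ContinuousLinearMap.apply ℂ (Matrix n n ℂ) 1)).mapL (rm ρ)
  have hterm : (fun k : ℕ => (rm ρ) ((ContinuousLinearMap.apply ℂ (Matrix n n ℂ) 1)
        (((k.factorial : ℂ)⁻¹) • (lm M) ^ k)))
      = fun k : ℕ => (ContinuousLinearMap.apply ℂ (Matrix n n ℂ) ρ)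
        (((k.factorial : ℂ)⁻¹) • (lm M) ^ k) := by
    funext k
    show ((((k.factorial : ℂ)⁻¹) • (lm M) ^ k) 1) * ρ = (((k.factorial : ℂ)⁻¹) • (lm M) ^ k) ρ
    rw [ContinuousLinearMap.smul_apply, ContinuousLinearMap.smul_apply,
      lm_pow_apply, lm_pow_apply, smul_mul_assoc, mul_one]
  rw [hterm] at h2
  exact h1.unique h2

lemma exp_rm_apply (ρ : Matrix n n ℂ) :
    NormedSpace.exp (rm M) ρ = ρ * (NormedSpace.exp (rm M) 1) := by
  have hs := exp_hasSum (rm M)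
  have h1 := hs.mapL (ContinuousLinearMap.apply ℂ (Matrix n n ℂ) ρ)
  have h2 := (hs.mapL (ContinuousLinearMap.apply ℂ (Matrix n n ℂ) 1)).mapL (lm ρ)
  have hterm : (fun k : ℕ => (lm ρ) ((ContinuousLinearMap.apply ℂ (Matrix n n ℂ) 1)
        (((k.factorial : ℂ)⁻¹) • (rm M) ^ k)))
      = fun k : ℕ => (ContinuousLinearMap.apply ℂ (Matrix n n ℂ) ρ)
        (((k.factorial : ℂ)⁻¹) • (rm M) ^ k) := by
    funext k
    show ρ * ((((k.factorial : ℂ)⁻¹) • (rm M) ^ k) 1) = (((k.factorial : ℂ)⁻¹) • (rm M) ^ k) ρ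
    rw [ContinuousLinearMap.smul_apply, ContinuousLinearMap.smul_apply,
      rm_pow_apply, rm_pow_apply, mul_smul_comm, one_mul]
  rw [hterm] at h2
  exact h1.unique h2

/-- conjTranspose as a continuous additive monoid hom. -/
noncomputable def ctAM : Matrix n n ℂ →+ Matrix n n ℂ where
  toFun := fun ρ => ρᴴ
  map_zero' := conjTranspose_zero
  map_add' := conjTranspose_add

@[simp] lemma ctAM_apply (ρ : Matrix n n ℂ) : ctAM ρ = ρᴴ := rfl

lemma ctAM_continuous : Continuous (ctAM (n := n)) :=
  continuous_matrix fun i j => (continuous_entry j i).star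

lemma exp_rm_one : NormedSpace.exp (rm Mᴴ) 1 = (NormedSpace.exp (lm M) 1)ᴴ := by
  have hsW := (exp_hasSum (lm M)).mapL (ContinuousLinearMap.apply ℂ (Matrix n n ℂ) 1)
  have hsW' := (exp_hasSum (rm Mᴴ)).mapL (ContinuousLinearMap.apply ℂ (Matrix n n ℂ) 1)
  have hct0 := hsW.map ctAM ctAM_continuous
  have hfun : (⇑ctAM ∘ fun k : ℕ => (ContinuousLinearMap.apply ℂ (Matrix n n ℂ) 1)
        (((k.factorial : ℂ)⁻¹) • (lm M) ^ k))
      = fun k : ℕ => (ContinuousLinearMap.apply ℂ (Matrix n n ℂ) 1)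
        (((k.factorial : ℂ)⁻¹) • (rm Mᴴ) ^ k) := by
    funext k
    show ((((k.factorial : ℂ)⁻¹) • (lm M) ^ k) 1)ᴴ = (((k.factorial : ℂ)⁻¹) • (rm Mᴴ) ^ k) 1
    rw [ContinuousLinearMap.smul_apply, ContinuousLinearMap.smul_apply,
      lm_pow_apply, rm_pow_apply, mul_one, one_mul, conjTranspose_smul,
      conjTranspose_pow]
    congr 1
    rw [Complex.star_def, ← Complex.ofReal_natCast, ← Complex.ofReal_inv,
      Complex.conj_ofReal]
  rw [hfun] at hct0
  have h := hsW'.unique hct0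
  simp only [ContinuousLinearMap.apply_apply, ctAM_apply] at h
  exact h

lemma exp_conj_pres : Pres (NormedSpace.exp (lm M + rm Mᴴ)) := by
  have hcomm : Commute (lm M) (rm Mᴴ) := by
    refine ContinuousLinearMap.ext fun ρ => ?_
    show M * (ρ * Mᴴ) = (M * ρ) * Mᴴ
    rw [mul_assoc]
  letI : NormedAlgebra ℚ (Matrix n n ℂ →L[ℂ] Matrix n n ℂ) :=
    NormedAlgebra.restrictScalars ℚ ℂ (Matrix n n ℂ →L[ℂ] Matrix n n ℂ)
  rw [NormedSpace.exp_add_of_commute hcomm]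
  intro ρ hρ
  have happ : (NormedSpace.exp (lm M) * NormedSpace.exp (rm Mᴴ)) ρ
      = (NormedSpace.exp (lm M) 1) * ρ * (NormedSpace.exp (lm M) 1)ᴴ := by
    rw [ContinuousLinearMap.mul_apply, exp_rm_apply, exp_rm_one, exp_lm_apply, mul_assoc]
  rw [happ]
  exact hρ.mul_mul_conjTranspose_same _

end Conj




section Part4
variable {n : Type*} [Fintype n] [DecidableEq n] [Nonempty n]

lemma nonneg_re_im {z : ℂ} (hz : 0 ≤ z) : 0 ≤ z.re ∧ z.im = 0 := by
  rw [Complex.le_def] at hz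
  exact ⟨hz.1, hz.2.symm⟩

lemma norm_of_nonneg {z : ℂ} (hz : 0 ≤ z) : ‖z‖ = z.re := by
  obtain ⟨h1, h2⟩ := nonneg_re_im hz
  have hz' : z = ((z.re : ℝ) : ℂ) := Complex.ext rfl (by simpa using h2)
  rw [hz']
  simpa using abs_of_nonneg h1

lemma psd_diag_nonneg {σ : Matrix n n ℂ} (hσ : σ.PosSemidef) (i : n) : 0 ≤ σ i i := by
  have h := hσ.dotProduct_mulVec_nonneg (Pi.single i 1)
  have he : star (Pi.single i (1:ℂ)) ⬝ᵥ σ.mulVec (Pi.single i 1) = σ i i := by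
    rw [← Pi.single_star, star_one, single_dotProduct, mulVec_single]
    simp
  rwa [he] at h

lemma psd_trace_re_nonneg {σ : Matrix n n ℂ} (hσ : σ.PosSemidef) : 0 ≤ σ.trace.re := by
  rw [Matrix.trace, Complex.re_sum]
  exact Finset.sum_nonneg fun i _ => (nonneg_re_im (psd_diag_nonneg hσ i)).1

lemma psd_diag_re_le_trace {σ : Matrix n n ℂ} (hσ : σ.PosSemidef) (i : n) :
    (σ i i).re ≤ σ.trace.re := by
  rw [Matrix.trace, Complex.re_sum]
  exact Finset.single_le_sum (fun j _ => (nonneg_re_im (psd_diag_nonneg hσ j)).1)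
    (Finset.mem_univ i)

lemma quadform_two {σ : Matrix n n ℂ} (i j : n) (hij : i ≠ j) (b : ℂ) :
    star (Pi.single i 1 + Pi.single j b) ⬝ᵥ σ.mulVec (Pi.single i 1 + Pi.single j b)
      = σ i i + b * σ i j + star b * σ j i + star b * b * σ j j := by
  rw [star_add, ← Pi.single_star, ← Pi.single_star, star_one, mulVec_add,
    mulVec_single, mulVec_single]
  simp only [add_dotProduct, dotProduct_add, single_dotProduct, Pi.smul_apply, op_smul_eq_mul,
    Matrix.col_apply, mul_one]
  ring

lemma psd_entry_norm_le {σ : Matrix n n ℂ} (hσ : σ.PosSemidef) (i j : n) :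
    ‖σ i j‖ ≤ σ.trace.re := by
  by_cases hij : i = j
  · subst hij
    rw [norm_of_nonneg (psd_diag_nonneg hσ i)]
    exact psd_diag_re_le_trace hσ i
  · set z := σ i j with hz
    by_cases hz0 : z = 0
    · rw [hz0]; simpa using psd_trace_re_nonneg hσ
    · have hzn : (0:ℝ) < ‖z‖ := norm_pos_iff.mpr hz0
      set b : ℂ := -(star z) / (‖z‖ : ℂ) with hb
      have hzC : ((‖z‖ : ℝ) : ℂ) ≠ 0 := by exact_mod_cast hzn.ne'
      have hzz : star z * z = ((‖z‖ ^ 2 : ℝ) : ℂ) := by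
        rw [mul_comm, Complex.star_def, Complex.mul_conj, Complex.normSq_eq_norm_sq]
      have hbz : b * z = -((‖z‖ : ℝ) : ℂ) := by
        rw [hb, div_mul_eq_mul_div, neg_mul, hzz, neg_div]
        congr 1
        rw [pow_two]
        push_cast
        rw [mul_div_assoc, div_self hzC, mul_one]
      have hnb : ‖b‖ = 1 := by
        rw [hb, norm_div, norm_neg, norm_star, Complex.norm_real, norm_norm]
        exact div_self hzn.ne'
      have hbb : star b * b = 1 := by
        rw [mul_comm, Complex.star_def, Complex.mul_conj]
        rw [Complex.normSq_eq_norm_sq, hnb]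
        norm_num
      have hji : σ j i = star z := by rw [hz, ← hσ.1.apply i j, star_star]
      have hq := hσ.dotProduct_mulVec_nonneg (Pi.single i 1 + Pi.single j b)
      rw [quadform_two i j hij b] at hq
      have hsb : star b * σ j i = -((‖z‖ : ℝ) : ℂ) := by
        rw [hji, ← star_mul', hbz]
        simp [Complex.star_def, Complex.conj_ofReal]
      rw [← hz, hbz, hsb, hbb, one_mul] at hq
      obtain ⟨h1, _⟩ := nonneg_re_im hq
      simp only [Complex.add_re, Complex.neg_re, Complex.ofReal_re] at h1
      have d1 := psd_diag_re_le_trace hσ i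
      have d2 := psd_diag_re_le_trace hσ j
      have d3 := psd_trace_re_nonneg hσ
      linarith

lemma psd_norm_le_trace {σ : Matrix n n ℂ} (hσ : σ.PosSemidef) : ‖σ‖ ≤ σ.trace.re :=
  (Matrix.norm_le_iff (psd_trace_re_nonneg hσ)).mpr fun i j => psd_entry_norm_le hσ i j

lemma herm_decomp {A : Matrix n n ℂ} (hA : A.IsHermitian) :
    ∃ P Q : Matrix n n ℂ, P.PosSemidef ∧ Q.PosSemidef ∧ A = P - Q := by
  have h1 : (A + 1)ᴴ = A + 1 := by rw [conjTranspose_add, hA.eq, conjTranspose_one]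
  have h2 : (A - 1)ᴴ = A - 1 := by rw [conjTranspose_sub, hA.eq, conjTranspose_one]
  refine ⟨((1/4 : ℝ) : ℂ) • ((A + 1)ᴴ * (A + 1)), ((1/4 : ℝ) : ℂ) • ((A - 1)ᴴ * (A - 1)),
    posSemidef_real_smul (posSemidef_conjTranspose_mul_self _) (by norm_num),
    posSemidef_real_smul (posSemidef_conjTranspose_mul_self _) (by norm_num), ?_⟩
  rw [h1, h2, ← smul_sub]
  have hexp : (A + 1) * (A + 1) - (A - 1) * (A - 1) = A + A + A + A := by noncomm_ring
  rw [hexp, show ((1/4 : ℝ) : ℂ) = (1/4 : ℂ) by norm_num]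
  module

lemma four_decomp (x : Matrix n n ℂ) :
    ∃ P1 Q1 P2 Q2 : Matrix n n ℂ, P1.PosSemidef ∧ Q1.PosSemidef ∧ P2.PosSemidef ∧
      Q2.PosSemidef ∧ x = (P1 - Q1) + Complex.I • (P2 - Q2) := by
  set A : Matrix n n ℂ := (1/2 : ℂ) • (x + xᴴ) with hA
  set B : Matrix n n ℂ := (-((1/2 : ℂ) * Complex.I)) • (x - xᴴ) with hB
  have hAh : A.IsHermitian := by
    show Aᴴ = A
    rw [hA, conjTranspose_smul, conjTranspose_add, conjTranspose_conjTranspose]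
    rw [show star (1/2 : ℂ) = (1/2 : ℂ) by simp]
    rw [add_comm]
  have hBh : B.IsHermitian := by
    show Bᴴ = B
    rw [hB, conjTranspose_smul, conjTranspose_sub, conjTranspose_conjTranspose]
    rw [show star (-((1/2 : ℂ) * Complex.I)) = (1/2 : ℂ) * Complex.I by
      simp [Complex.star_def]]
    rw [neg_smul, ← smul_neg, neg_sub]
  have hxAB : x = A + Complex.I • B := by
    rw [hA, hB, smul_smul]
    rw [show Complex.I * (-((1/2 : ℂ) * Complex.I)) = (1/2 : ℂ) by
      rw [show Complex.I * (-((1/2 : ℂ) * Complex.I)) = -((1/2:ℂ) * (Complex.I * Complex.I)) by ring,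
        Complex.I_mul_I]
      ring]
    module
  obtain ⟨P1, Q1, hP1, hQ1, hA1⟩ := herm_decomp hAh
  obtain ⟨P2, Q2, hP2, hQ2, hB1⟩ := herm_decomp hBh
  exact ⟨P1, Q1, P2, Q2, hP1, hQ1, hP2, hQ2, by rw [hxAB, hA1, hB1]⟩

end Part4

section Part5
variable {n : Type*} [Fintype n] [DecidableEq n] [Nonempty n]
variable {ι : Type*} [Fintype ι]

/-- The effective non-Hermitian Hamiltonian part. -/
noncomputable def Kmat (H : Matrix n n ℂ) (V : ι → Matrix n n ℂ) : Matrix n n ℂ :=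
  (-Complex.I) • H - (1/2 : ℂ) • ∑ d, (V d)ᴴ * V d

/-- The jump part of the Lindbladian. -/
noncomputable def psiLin (V : ι → Matrix n n ℂ) : Matrix n n ℂ →L[ℂ] Matrix n n ℂ :=
  ∑ d, lm (V d) * rm ((V d)ᴴ)

lemma psiLin_apply (V : ι → Matrix n n ℂ) (ρ : Matrix n n ℂ) :
    psiLin V ρ = ∑ d, V d * ρ * (V d)ᴴ := by
  rw [psiLin, ContinuousLinearMap.sum_apply]
  refine Finset.sum_congr rfl fun d _ => ?_
  rw [ContinuousLinearMap.mul_apply, rm_apply, lm_apply, mul_assoc]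

lemma psiLin_pres (V : ι → Matrix n n ℂ) : Pres (psiLin V) := by
  intro ρ hρ
  rw [psiLin_apply]
  refine Finset.sum_induction _ _ (fun a b ha hb => ha.add hb) Matrix.PosSemidef.zero
    (fun d _ => hρ.mul_mul_conjTranspose_same _)

lemma lm_smul (c : ℂ) (M : Matrix n n ℂ) : lm (c • M) = c • lm M := by
  refine ContinuousLinearMap.ext fun ρ => ?_
  rw [lm_apply, ContinuousLinearMap.smul_apply, lm_apply, smul_mul_assoc]

lemma rm_smul (c : ℂ) (M : Matrix n n ℂ) : rm (c • M) = c • rm M := by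
  refine ContinuousLinearMap.ext fun ρ => ?_
  rw [rm_apply, ContinuousLinearMap.smul_apply, rm_apply, mul_smul_comm]

lemma lindblad_clm_split (H : Matrix n n ℂ) (hH : H.IsHermitian) (V : ι → Matrix n n ℂ)
    (t : ℝ) :
    (t : ℂ) • LinearMap.toContinuousLinearMap (lindbladOp H V)
      = (lm ((t : ℂ) • Kmat H V) + rm (((t : ℂ) • Kmat H V)ᴴ)) + (t : ℂ) • psiLin V := by
  have hKH : (Kmat H V)ᴴ = Complex.I • H - (1/2 : ℂ) • ∑ d, (V d)ᴴ * V d := by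
    rw [Kmat, conjTranspose_sub, conjTranspose_smul, conjTranspose_smul, hH.eq,
      conjTranspose_sum]
    congr 1
    · congr 1
      simp [Complex.star_def]
    · congr 1
      · simp [Complex.star_def]
      · refine Finset.sum_congr rfl fun d _ => ?_
        rw [conjTranspose_mul, conjTranspose_conjTranspose]
  refine ContinuousLinearMap.ext fun ρ => ?_
  rw [ContinuousLinearMap.add_apply, ContinuousLinearMap.add_apply,
    ContinuousLinearMap.smul_apply, ContinuousLinearMap.smul_apply, lm_apply, rm_apply,
    psiLin_apply, conjTranspose_smul]
  rw [show star (t : ℂ) = (t : ℂ) from Complex.conj_ofReal t]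
  rw [hKH, Kmat]
  have happ : LinearMap.toContinuousLinearMap (lindbladOp H V) ρ
      = -Complex.I • (H * ρ - ρ * H) + ∑ d, (V d * ρ * (V d)ᴴ
          - (1 / 2 : ℂ) • ((V d)ᴴ * V d * ρ + ρ * ((V d)ᴴ * V d))) := rfl
  rw [happ]
  simp only [sub_mul, add_mul, mul_sub, mul_add, smul_mul_assoc, mul_smul_comm,
    Finset.sum_mul, Finset.mul_sum, Finset.sum_sub_distrib, Finset.sum_add_distrib,
    ← Finset.smul_sum, smul_sub, smul_add, neg_smul, neg_mul]
  module

lemma pres_exp_lindblad (H : Matrix n n ℂ) (hH : H.IsHermitian) (V : ι → Matrix n n ℂ)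
    (t : ℝ) (ht : 0 ≤ t) :
    Pres (NormedSpace.exp ((t : ℂ) • LinearMap.toContinuousLinearMap (lindbladOp H V))) := by
  rw [lindblad_clm_split H hH V t]
  set X := lm ((t : ℂ) • Kmat H V) + rm (((t : ℂ) • Kmat H V)ᴴ) with hX
  set Y := (t : ℂ) • psiLin V with hY
  refine Pres.of_tendsto (trotter_tendsto X Y) ?_
  filter_upwards [eventually_ge_atTop 1] with m hm
  have hm0 : (m : ℂ) ≠ 0 := Nat.cast_ne_zero.mpr (by omega)
  refine Pres.pow (Pres.mul ?_ ?_) m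
  · have hct : (((m:ℂ)⁻¹ • ((t:ℂ) • Kmat H V))ᴴ) = (m:ℂ)⁻¹ • (((t:ℂ) • Kmat H V)ᴴ) := by
      rw [conjTranspose_smul, star_inv₀, star_natCast]
    have hXs : (m : ℂ)⁻¹ • X = lm ((m : ℂ)⁻¹ • ((t : ℂ) • Kmat H V))
        + rm (((m : ℂ)⁻¹ • ((t : ℂ) • Kmat H V))ᴴ) := by
      rw [hX, smul_add, ← lm_smul, hct, ← rm_smul]
    rw [hXs]
    exact exp_conj_pres _
  · have hYs : (m : ℂ)⁻¹ • Y = (((t / m : ℝ)) : ℂ) • psiLin V := by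
      rw [hY, smul_smul]
      congr 1
      push_cast
      ring
    rw [hYs]
    exact (psiLin_pres V).exp_real_smul (by positivity)

lemma trace_lindblad (H : Matrix n n ℂ) (V : ι → Matrix n n ℂ) (ρ : Matrix n n ℂ) :
    (lindbladOp H V ρ).trace = 0 := by
  have happ : lindbladOp H V ρ
      = -Complex.I • (H * ρ - ρ * H) + ∑ d, (V d * ρ * (V d)ᴴ
          - (1 / 2 : ℂ) • ((V d)ᴴ * V d * ρ + ρ * ((V d)ᴴ * V d))) := rfl
  rw [happ, trace_add, trace_smul, trace_sub, trace_mul_comm, sub_self, smul_zero,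
    zero_add, trace_sum]
  refine Finset.sum_eq_zero fun d _ => ?_
  rw [trace_sub, trace_smul, trace_add]
  rw [show (V d * ρ * (V d)ᴴ).trace = ((V d)ᴴ * V d * ρ).trace by
    rw [trace_mul_comm, ← mul_assoc]]
  rw [show (ρ * ((V d)ᴴ * V d)).trace = ((V d)ᴴ * V d * ρ).trace from trace_mul_comm _ _]
  rw [smul_eq_mul]
  ring

/-- The trace as a continuous linear functional. -/
noncomputable def trCLM : Matrix n n ℂ →L[ℂ] ℂ :=
  LinearMap.toContinuousLinearMap (Matrix.traceLinearMap n ℂ ℂ)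

lemma trCLM_apply (ρ : Matrix n n ℂ) : trCLM ρ = ρ.trace := rfl

lemma trace_exp_of_traceless (L' : Matrix n n ℂ →L[ℂ] Matrix n n ℂ)
    (hL : ∀ ρ : Matrix n n ℂ, (L' ρ).trace = 0) (ρ : Matrix n n ℂ) :
    ((NormedSpace.exp L') ρ).trace = ρ.trace := by
  have h1 := ((exp_hasSum L').mapL (ContinuousLinearMap.apply ℂ (Matrix n n ℂ) ρ)).mapL trCLM
  have h2 : HasSum (fun m : ℕ => trCLM ((ContinuousLinearMap.apply ℂ (Matrix n n ℂ) ρ)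
      (((m.factorial : ℂ)⁻¹) • L' ^ m))) (ρ.trace) := by
    have hz : ∀ m : ℕ, m ≠ 0 → trCLM ((ContinuousLinearMap.apply ℂ (Matrix n n ℂ) ρ)
        (((m.factorial : ℂ)⁻¹) • L' ^ m)) = 0 := by
      intro m hm
      obtain ⟨j, rfl⟩ : ∃ j, m = j + 1 := ⟨m - 1, by omega⟩
      show Matrix.trace ((((j+1).factorial : ℂ)⁻¹) • ((L' ^ (j+1)) ρ)) = 0
      rw [pow_succ', ContinuousLinearMap.mul_apply, Matrix.trace_smul, hL, smul_zero]
    have hs := hasSum_single (f := fun m : ℕ => trCLM ((ContinuousLinearMap.apply ℂ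
        (Matrix n n ℂ) ρ) (((m.factorial : ℂ)⁻¹) • L' ^ m))) 0 (fun b hb => hz b hb)
    have h0 : trCLM ((ContinuousLinearMap.apply ℂ (Matrix n n ℂ) ρ)
        ((((0:ℕ).factorial : ℂ)⁻¹) • L' ^ 0)) = ρ.trace := by
      show ((((0:ℕ).factorial : ℂ)⁻¹) • (L' ^ 0) ρ).trace = ρ.trace
      rw [pow_zero]
      simp [ContinuousLinearMap.one_apply]
    exact h0 ▸ hs
  exact h1.unique h2

end Part5

end LindbladProof

open LindbladProof in
/-- Eigenvalues of the Lindblad generator with zero real part have no nontrivial Jordan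
blocks: generalized eigenspaces coincide with eigenspaces. -/
theorem lindblad_imaginary_eigenvalue_no_jordan_block (N : ℕ) (hN : 1 ≤ N)
    (H : Matrix (Fin N) (Fin N) ℂ) (hH : H.IsHermitian)
    {ι : Type*} [Fintype ι] (V : ι → Matrix (Fin N) (Fin N) ℂ)
    (γ : ℂ) (hγ : γ.re = 0) (k : ℕ) (hk : 1 ≤ k) :
    LinearMap.ker ((lindbladOp H V - γ • (1 : Module.End ℂ (Matrix (Fin N) (Fin N) ℂ))) ^ k)
      = LinearMap.ker
        (lindbladOp H V - γ • (1 : Module.End ℂ (Matrix (Fin N) (Fin N) ℂ))) := by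
  haveI : Nonempty (Fin N) := ⟨⟨0, hN⟩⟩
  set D : Module.End ℂ (Matrix (Fin N) (Fin N) ℂ)
    := lindbladOp H V - γ • (1 : Module.End ℂ (Matrix (Fin N) (Fin N) ℂ)) with hD
  have key : ∀ x : Matrix (Fin N) (Fin N) ℂ, D (D x) = 0 → D x = 0 := by
    intro x hx2
    set y := D x with hy
    set L' := LinearMap.toContinuousLinearMap (lindbladOp H V) with hL'
    set D' : Matrix (Fin N) (Fin N) ℂ →L[ℂ] Matrix (Fin N) (Fin N) ℂ
      := L' - γ • (1 : Matrix (Fin N) (Fin N) ℂ →L[ℂ] Matrix (Fin N) (Fin N) ℂ) with hD''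
    have hD'app : ∀ z, D' z = D z := fun z => rfl
    -- the evolution of the generalized eigenvector
    have hexp : ∀ t : ℝ, (NormedSpace.exp ((t:ℂ) • L')) x
        = Complex.exp ((t:ℂ) * γ) • (x + (t:ℂ) • y) := by
      intro t
      have hsplit : (t:ℂ) • L' = ((t:ℂ) * γ) • (1 : Matrix (Fin N) (Fin N) ℂ →L[ℂ]
          Matrix (Fin N) (Fin N) ℂ) + (t:ℂ) • D' := by
        rw [hD'', smul_sub, smul_smul]
        abel
      have hcomm : Commute (((t:ℂ) * γ) • (1 : Matrix (Fin N) (Fin N) ℂ →L[ℂ]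
          Matrix (Fin N) (Fin N) ℂ)) ((t:ℂ) • D') := by
        refine ContinuousLinearMap.ext fun ρ => ?_
        simp only [ContinuousLinearMap.mul_apply, ContinuousLinearMap.smul_apply,
          ContinuousLinearMap.one_apply, ContinuousLinearMap.map_smul]
        rw [smul_comm]
      letI : NormedAlgebra ℚ (Matrix (Fin N) (Fin N) ℂ →L[ℂ] Matrix (Fin N) (Fin N) ℂ) :=
        NormedAlgebra.restrictScalars ℚ ℂ (Matrix (Fin N) (Fin N) ℂ →L[ℂ] Matrix (Fin N) (Fin N) ℂ)
      rw [hsplit, NormedSpace.exp_add_of_commute hcomm]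
      have h1 : NormedSpace.exp (((t:ℂ) * γ) • (1 : Matrix (Fin N) (Fin N) ℂ →L[ℂ]
          Matrix (Fin N) (Fin N) ℂ)) = Complex.exp ((t:ℂ) * γ) • 1 := by
        rw [← Algebra.algebraMap_eq_smul_one, ← NormedSpace.algebraMap_exp_comm,
          ← Complex.exp_eq_exp_ℂ, Algebra.algebraMap_eq_smul_one]
      have h2 : (NormedSpace.exp ((t:ℂ) • D')) x = x + (t:ℂ) • y := by
        have hs := (exp_hasSum ((t:ℂ) • D')).mapL
          (ContinuousLinearMap.apply ℂ (Matrix (Fin N) (Fin N) ℂ) x)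
        have hzero : ∀ b ∉ ({0, 1} : Finset ℕ),
            (ContinuousLinearMap.apply ℂ (Matrix (Fin N) (Fin N) ℂ) x)
              (((b.factorial : ℂ)⁻¹) • ((t:ℂ) • D') ^ b) = 0 := by
          intro b hb
          simp only [Finset.mem_insert, Finset.mem_singleton] at hb
          obtain ⟨j, rfl⟩ : ∃ j, b = j + 2 := ⟨b - 2, by omega⟩
          show (((j+2).factorial : ℂ)⁻¹) • (((t:ℂ) • D') ^ (j+2)) x = 0
          rw [smul_clm_pow_apply]
          have hz2 : (D' ^ (j+2)) x = 0 := by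
            rw [pow_add, ContinuousLinearMap.mul_apply]
            have h22 : (D' ^ 2) x = 0 := by
              rw [pow_two, ContinuousLinearMap.mul_apply, hD'app, hD'app]
              exact hx2
            rw [h22, map_zero]
          rw [hz2, smul_zero, smul_zero]
        have hfin := hasSum_sum_of_ne_finset_zero (L := SummationFilter.unconditional ℕ) hzero
        have hval : (∑ b ∈ ({0, 1} : Finset ℕ),
            (ContinuousLinearMap.apply ℂ (Matrix (Fin N) (Fin N) ℂ) x)
              (((b.factorial : ℂ)⁻¹) • ((t:ℂ) • D') ^ b)) = x + (t:ℂ) • y := by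
          rw [Finset.sum_insert (by norm_num), Finset.sum_singleton]
          show (((0:ℕ).factorial : ℂ)⁻¹) • (((t:ℂ) • D') ^ 0) x
              + (((1:ℕ).factorial : ℂ)⁻¹) • (((t:ℂ) • D') ^ 1) x = x + (t:ℂ) • y
          rw [pow_zero, pow_one]
          rw [show (((0:ℕ).factorial : ℂ)⁻¹) = 1 by norm_num,
            show (((1:ℕ).factorial : ℂ)⁻¹) = 1 by norm_num, one_smul, one_smul]
          rw [ContinuousLinearMap.one_apply, ContinuousLinearMap.smul_apply, hD'app]
        rw [hval] at hfin
        exact hs.unique hfin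
      rw [h1, ContinuousLinearMap.mul_apply, ContinuousLinearMap.smul_apply,
        ContinuousLinearMap.one_apply, h2]
    -- uniform bound on the evolution of x
    have hb : ∀ P : Matrix (Fin N) (Fin N) ℂ, P.PosSemidef → ∀ t : ℝ, 0 ≤ t →
        ‖(NormedSpace.exp ((t:ℂ) • L')) P‖ ≤ P.trace.re := by
      intro P hP t ht
      have hpsd : ((NormedSpace.exp ((t:ℂ) • L')) P).PosSemidef :=
        pres_exp_lindblad H hH V t ht P hP
      have htr : ((NormedSpace.exp ((t:ℂ) • L')) P).trace = P.trace := by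
        refine trace_exp_of_traceless _ (fun ρ => ?_) P
        rw [ContinuousLinearMap.smul_apply, Matrix.trace_smul,
          show L' ρ = lindbladOp H V ρ from rfl, trace_lindblad, smul_zero]
      have := psd_norm_le_trace hpsd
      rwa [htr] at this
    obtain ⟨P1, Q1, P2, Q2, hP1, hQ1, hP2, hQ2, hxde⟩ := four_decomp x
    set Cb : ℝ := P1.trace.re + Q1.trace.re + P2.trace.re + Q2.trace.re with hCb
    have hCbound : ∀ t : ℝ, 0 ≤ t → ‖(NormedSpace.exp ((t:ℂ) • L')) x‖ ≤ Cb := by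
      intro t ht
      set T := NormedSpace.exp ((t:ℂ) • L') with hT
      have hTx : T x = (T P1 - T Q1) + Complex.I • (T P2 - T Q2) := by
        rw [hxde, map_add, _root_.map_smul, map_sub, map_sub]
      rw [hTx]
      have b1 := hb P1 hP1 t ht
      have b2 := hb Q1 hQ1 t ht
      have b3 := hb P2 hP2 t ht
      have b4 := hb Q2 hQ2 t ht
      calc ‖(T P1 - T Q1) + Complex.I • (T P2 - T Q2)‖
          ≤ ‖T P1 - T Q1‖ + ‖Complex.I • (T P2 - T Q2)‖ := norm_add_le _ _
        _ = ‖T P1 - T Q1‖ + ‖T P2 - T Q2‖ := by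
            rw [norm_smul, Complex.norm_I, one_mul]
        _ ≤ (‖T P1‖ + ‖T Q1‖) + (‖T P2‖ + ‖T Q2‖) :=
            add_le_add (norm_sub_le _ _) (norm_sub_le _ _)
        _ ≤ Cb := by rw [hCb]; linarith
    -- linear growth forces y = 0
    by_contra hy0
    have hyn : (0:ℝ) < ‖y‖ := norm_pos_iff.mpr hy0
    have hCb0 : 0 ≤ Cb := by
      rw [hCb]
      have := psd_trace_re_nonneg hP1
      have := psd_trace_re_nonneg hQ1
      have := psd_trace_re_nonneg hP2
      have := psd_trace_re_nonneg hQ2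
      linarith
    set t0 : ℝ := (Cb + ‖x‖ + 1) / ‖y‖ with ht0
    have ht0n : 0 ≤ t0 := by positivity
    have hnorm1 : ‖Complex.exp ((t0:ℂ) * γ)‖ = 1 := by
      rw [Complex.norm_exp]
      rw [show ((t0:ℂ) * γ).re = 0 by simp [Complex.mul_re, hγ]]
      exact Real.exp_zero
    have hmain : ‖x + (t0:ℂ) • y‖ ≤ Cb := by
      have := hCbound t0 ht0n
      rwa [hexp t0, norm_smul, hnorm1, one_mul] at this
    have hty : ‖(t0:ℂ) • y‖ = t0 * ‖y‖ := by
      rw [norm_smul, Complex.norm_real, Real.norm_eq_abs, abs_of_nonneg ht0n]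
    have htri : ‖(t0:ℂ) • y‖ ≤ ‖x + (t0:ℂ) • y‖ + ‖x‖ := by
      have h := norm_sub_le (x + (t0:ℂ) • y) x
      simpa using h
    have heq : t0 * ‖y‖ = Cb + ‖x‖ + 1 := by
      rw [ht0]
      field_simp
    rw [hty, heq] at htri
    linarith
  -- induction on k
  have main : ∀ m : ℕ, 1 ≤ m → LinearMap.ker (D ^ m) = LinearMap.ker D := by
    intro m hm
    induction m with
    | zero => omega
    | succ m ih =>
      rcases Nat.eq_zero_or_pos m with h0 | h1
      · subst h0; rw [pow_one]
      · apply le_antisymm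
        · intro x hx
          have hx' : (D ^ (m+1)) x = 0 := hx
          rw [pow_succ, Module.End.mul_apply] at hx'
          have hDx : D x ∈ LinearMap.ker (D ^ m) := hx'
          rw [ih h1] at hDx
          have : D (D x) = 0 := hDx
          exact key x this
        · intro x hx
          have hx' : D x = 0 := hx
          show (D ^ (m+1)) x = 0
          rw [pow_succ, Module.End.mul_apply, hx', map_zero]
  exact main k hk
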